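/- Let B be a Banach A-bimodule such that every continuous derivation D : A → B* satisfies D''(A**) ⊆ wap_ℓ(B). If every continuous derivation from A** into B*** is inner, then every continuous derivation from A into B* is inner. -/

import Mathlib

open ContinuousLinearMap NormedSpace

noncomputable section

namespace NormedSpace

/-- The topological dual `E →L[𝕜] 𝕜`, as `NormedSpace.Dual` was defined in the older Mathlib. -/
abbrev Dual (𝕜 : Type*) [NontriviallyNormedField 𝕜] (E : Type*) [SeminormedAddCommGroup E]
    [NormedSpace 𝕜 E] : Type _ :=
  E →L[𝕜] 𝕜

end NormedSpace

section Defs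

variable {X Y Z W : Type} [NormedAddCommGroup X] [NormedSpace ℝ X]
  [NormedAddCommGroup Y] [NormedSpace ℝ Y] [NormedAddCommGroup Z] [NormedSpace ℝ Z]
  [NormedAddCommGroup W] [NormedSpace ℝ W]

/-- The first adjoint `m^*` of a bounded bilinear map `m : X × Y → Z`,
as a map `Z^* × X → Y^*`, `⟨m^*(z',x), y⟩ = ⟨z', m(x,y)⟩`. -/
def adj1 (m : X →L[ℝ] Y →L[ℝ] Z) :
    Dual ℝ Z →L[ℝ] X →L[ℝ] Dual ℝ Y :=
  (((ContinuousLinearMap.compL ℝ X (Y →L[ℝ] Z) (Dual ℝ Y)).flip m).comp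
    (ContinuousLinearMap.compL ℝ Y Z ℝ))

@[simp] lemma adj1_apply (m : X →L[ℝ] Y →L[ℝ] Z) (z' : Dual ℝ Z) (x : X) (y : Y) :
    adj1 m z' x y = z' (m x y) := rfl

/-- The first (left) Arens extension `m^{***} : X^{**} × Y^{**} → Z^{**}` of a
bounded bilinear map `m : X × Y → Z`. -/
def arens (m : X →L[ℝ] Y →L[ℝ] Z) :
    Dual ℝ (Dual ℝ X) →L[ℝ] Dual ℝ (Dual ℝ Y) →L[ℝ] Dual ℝ (Dual ℝ Z) :=
  adj1 (adj1 (adj1 m))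

/-- The adjoint (dual map) of a bounded linear map. -/
def dualMap' (D : X →L[ℝ] Y) : Dual ℝ Y →L[ℝ] Dual ℝ X :=
  (ContinuousLinearMap.compL ℝ X Y ℝ).flip D

@[simp] lemma dualMap'_apply (D : X →L[ℝ] Y) (g : Dual ℝ Y) (x : X) :
    dualMap' D g x = g (D x) := rfl

/-- The second adjoint `D'' : X^{**} → Y^{**}` of a bounded linear map. -/
def bidualMap (D : X →L[ℝ] Y) : Dual ℝ (Dual ℝ X) →L[ℝ] Dual ℝ (Dual ℝ Y) :=
  dualMap' (dualMap' D)

/-- Given an action `t : A × X → X`, the transposed action on the dual `X^*`: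
`(dualAct t) a f = f ∘ (t a)`. -/
def dualAct (t : W →L[ℝ] X →L[ℝ] X) : W →L[ℝ] Dual ℝ X →L[ℝ] Dual ℝ X :=
  ((ContinuousLinearMap.compL ℝ X X ℝ).flip).comp t

@[simp] lemma dualAct_apply (t : W →L[ℝ] X →L[ℝ] X) (a : W) (f : Dual ℝ X) (x : X) :
    dualAct t a f x = f (t a x) := rfl

/-- `D : A → X` is a derivation with respect to the multiplication `mul'` on `A`
and the left action `l` and right action `r` (`r a x` means `x · a`) of `A` on `X`. -/
def IsDer {A' : Type} [NormedAddCommGroup A'] [NormedSpace ℝ A']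
    (mul' : A' →L[ℝ] A' →L[ℝ] A') (l r : A' →L[ℝ] X →L[ℝ] X) (D : A' →L[ℝ] X) : Prop :=
  ∀ a b : A', D (mul' a b) = l a (D b) + r b (D a)

/-- `D : A → X` is an inner derivation: `D a = a·x - x·a` for some `x`. -/
def IsInner {A' : Type} [NormedAddCommGroup A'] [NormedSpace ℝ A']
    (l r : A' →L[ℝ] X →L[ℝ] X) (D : A' →L[ℝ] X) : Prop :=
  ∃ x : X, ∀ a : A', D a = l a x - r a x

/-- The bimodule axioms for actions `l`, `r` of an algebra with multiplication `mul'`. -/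
def IsBimod {A' : Type} [NormedAddCommGroup A'] [NormedSpace ℝ A']
    (mul' : A' →L[ℝ] A' →L[ℝ] A') (l r : A' →L[ℝ] X →L[ℝ] X) : Prop :=
  (∀ a b x, l (mul' a b) x = l a (l b x)) ∧
  (∀ a b x, r (mul' a b) x = r b (r a x)) ∧
  (∀ a b x, l a (r b x) = r b (l a x))

/-- weak*-to-weak* continuity of a map between dual spaces. -/
def WStarCont (f : Dual ℝ X → Dual ℝ Y) : Prop :=
  ∀ y : Y, Continuous fun φ : WeakDual ℝ X => f φ y

end Defs

/-- A packaged Banach `A`-bimodule (used to form iterated duals). -/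
structure ModPk (A : Type) [NormedAddCommGroup A] [NormedSpace ℝ A] : Type 1 where
  X : Type
  [grp : NormedAddCommGroup X]
  [mod : NormedSpace ℝ X]
  l : A →L[ℝ] X →L[ℝ] X
  r : A →L[ℝ] X →L[ℝ] X

attribute [instance] ModPk.grp ModPk.mod

variable {A : Type} [NormedAddCommGroup A] [NormedSpace ℝ A]

/-- The canonical dual of a packaged bimodule. -/
def ModPk.dual (P : ModPk A) : ModPk A :=
  ⟨Dual ℝ P.X, dualAct P.r, dualAct P.l⟩

/-- The `n`-th iterated dual of a packaged bimodule. -/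
def ModPk.iter (P : ModPk A) : ℕ → ModPk A
  | 0 => P
  | n+1 => (P.iter n).dual

/-- A "level": an algebra (given by its bilinear multiplication) together with a bimodule. -/
structure Lvl : Type 1 where
  Alg : Type
  [g1 : NormedAddCommGroup Alg]
  [m1 : NormedSpace ℝ Alg]
  Mod : Type
  [g2 : NormedAddCommGroup Mod]
  [m2 : NormedSpace ℝ Mod]
  mul : Alg →L[ℝ] Alg →L[ℝ] Alg
  l : Alg →L[ℝ] Mod →L[ℝ] Mod
  r : Alg →L[ℝ] Mod →L[ℝ] Mod

attribute [instance] Lvl.g1 Lvl.m1 Lvl.g2 Lvl.m2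

/-- Passing to second duals: `A^{**}` with the first Arens product, acting on `B^{**}`
via the Arens extensions `π_ℓ^{***}` and `π_r^{***}` of the module actions. -/
def Lvl.double (Q : Lvl) : Lvl where
  Alg := Dual ℝ (Dual ℝ Q.Alg)
  Mod := Dual ℝ (Dual ℝ Q.Mod)
  mul := arens Q.mul
  l := arens Q.l
  r := (arens Q.r.flip).flip

/-- Iterated even duals: `Lvl.iter Q n` is the level `(A^{(2n)}, B^{(2n)})`. -/
def Lvl.iter (Q : Lvl) : ℕ → Lvl
  | 0 => Q
  | n+1 => (Q.iter n).double

/-- The canonical embedding `A → A^{(2n)}`. -/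
def Lvl.embA (Q : Lvl) : (n : ℕ) → Q.Alg →L[ℝ] (Q.iter n).Alg
  | 0 => ContinuousLinearMap.id ℝ _
  | n+1 => (inclusionInDoubleDual ℝ ((Q.iter n).Alg)).comp (Q.embA n)

/-- The canonical embedding `B → B^{(2n)}`. -/
def Lvl.embM (Q : Lvl) : (n : ℕ) → Q.Mod →L[ℝ] (Q.iter n).Mod
  | 0 => ContinuousLinearMap.id ℝ _
  | n+1 => (inclusionInDoubleDual ℝ ((Q.iter n).Mod)).comp (Q.embM n)

/-- The left-topological-center condition `Z^ℓ_{A^{(2n+2)}}(B^{(2n+2)}) = B^{(2n+2)}`,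
stated at the double of a level `Q`: for each `b` in the second-dual module, the map
`a ↦ b·a` is weak*-to-weak* continuous. -/
def Lvl.doubleZl (Q : Lvl) : Prop :=
  ∀ b : (Q.double).Mod, WStarCont (X := Dual ℝ Q.Alg) (Y := Dual ℝ Q.Mod)
    (fun a => (Q.double).r a b)

/-- The base level of a Banach algebra `A` with a Banach `A`-bimodule `B`. -/
def lvlOf (A : Type) [NormedRing A] [NormedAlgebra ℝ A]
    (B : Type) [NormedAddCommGroup B] [NormedSpace ℝ B]
    (l r : A →L[ℝ] B →L[ℝ] B) : Lvl :=
  Lvl.mk A B (ContinuousLinearMap.mul ℝ A) l r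
set_option maxHeartbeats 2000000 in
/-- **Corollary 2-14.** Let `B` be a Banach `A`-bimodule such that every continuous
derivation `D : A → B*` satisfies `D''(A**) ⊆ wap_ℓ(B)`. If every continuous derivation
`A** → B***` is inner, then every continuous derivation `A → B*` is inner. -/
theorem stmt10 (A : Type) [NormedRing A] [NormedAlgebra ℝ A] [CompleteSpace A]
    (B : Type) [NormedAddCommGroup B] [NormedSpace ℝ B] [CompleteSpace B]
    (l r : A →L[ℝ] B →L[ℝ] B)
    (hbim : IsBimod (ContinuousLinearMap.mul ℝ A) l r)
    -- every continuous derivation `A → B*` satisfies `D''(A**) ⊆ wap_ℓ(B)`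
    (hwap : ∀ D : A →L[ℝ] Dual ℝ B,
      IsDer (ContinuousLinearMap.mul ℝ A) (dualAct r) (dualAct l) D →
      ∀ F : Dual ℝ (Dual ℝ A), ∃ b' : Dual ℝ B,
        bidualMap D F = inclusionInDoubleDual ℝ (Dual ℝ B) b' ∧
        -- `b' ∈ wap_ℓ(B)`: the two Arens extensions of the left action agree against `b'`
        ∀ (F' : Dual ℝ (Dual ℝ A)) (G : Dual ℝ (Dual ℝ B)),
          arens l F' G b' = arens l.flip G F' b')
    -- `H¹(A**, B***) = 0`
    (hcoh : ∀ D2 : Dual ℝ (Dual ℝ A) →L[ℝ] Dual ℝ (Dual ℝ (Dual ℝ B)),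
      IsDer (arens (ContinuousLinearMap.mul ℝ A))
        (dualAct (W := Dual ℝ (Dual ℝ A)) (X := Dual ℝ (Dual ℝ B)) ((arens r.flip).flip))
        (dualAct (W := Dual ℝ (Dual ℝ A)) (X := Dual ℝ (Dual ℝ B)) (arens l)) D2 →
      IsInner
        (dualAct (W := Dual ℝ (Dual ℝ A)) (X := Dual ℝ (Dual ℝ B)) ((arens r.flip).flip))
        (dualAct (W := Dual ℝ (Dual ℝ A)) (X := Dual ℝ (Dual ℝ B)) (arens l)) D2) :
    -- `H¹(A, B*) = 0`
    ∀ D : A →L[ℝ] Dual ℝ B,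
      IsDer (ContinuousLinearMap.mul ℝ A) (dualAct r) (dualAct l) D →
      IsInner (dualAct r) (dualAct l) D := by
  intro D hD
  -- canonical embeddings, for readability
  -- `D'' : A** → B***` is a derivation for the Arens product and the extended actions
  have hder : IsDer (arens (ContinuousLinearMap.mul ℝ A))
      (dualAct (W := Dual ℝ (Dual ℝ A)) (X := Dual ℝ (Dual ℝ B)) ((arens r.flip).flip))
      (dualAct (W := Dual ℝ (Dual ℝ A)) (X := Dual ℝ (Dual ℝ B)) (arens l))
      (bidualMap D) := by
    intro F G
    obtain ⟨bF, hbF, hsF⟩ := hwap D hD F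
    obtain ⟨bG, hbG, -⟩ := hwap D hD G
    obtain ⟨bFG, hbFG, -⟩ := hwap D hD (arens (ContinuousLinearMap.mul ℝ A) F G)
    -- identification of `bFG`
    have key : bFG = F.comp (adj1 r.flip bG) + G.comp (adj1 l.flip bF) := by
      ext x
      have hsplit : ∀ a : A,
          adj1 (ContinuousLinearMap.mul ℝ A) (dualMap' D (inclusionInDoubleDual ℝ B x)) a
            = dualMap' D (inclusionInDoubleDual ℝ B (r a x)) + adj1 l.flip (D a) x := by
        intro a
        ext b
        show D (ContinuousLinearMap.mul ℝ A a b) x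
          = (dualMap' D (inclusionInDoubleDual ℝ B (r a x)) + adj1 l.flip (D a) x) b
        rw [hD a b]
        rfl
      have hAe : adj1 (adj1 (ContinuousLinearMap.mul ℝ A)) G
            (dualMap' D (inclusionInDoubleDual ℝ B x))
          = adj1 r.flip bG x + dualMap' D (G.comp ((adj1 l.flip).flip x)) := by
        ext a
        show G (adj1 (ContinuousLinearMap.mul ℝ A)
            (dualMap' D (inclusionInDoubleDual ℝ B x)) a)
          = (adj1 r.flip bG x + dualMap' D (G.comp ((adj1 l.flip).flip x))) a
        rw [hsplit a, map_add]
        have hG : G (dualMap' D (inclusionInDoubleDual ℝ B (r a x))) = bG (r a x) := by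
          have h1 : G (dualMap' D (inclusionInDoubleDual ℝ B (r a x)))
              = bidualMap D G (inclusionInDoubleDual ℝ B (r a x)) := rfl
          rw [h1, hbG]
          rfl
        rw [hG]
        rfl
      have h0 : bFG x = F (adj1 (adj1 (ContinuousLinearMap.mul ℝ A)) G
          (dualMap' D (inclusionInDoubleDual ℝ B x))) := by
        have h1 : bidualMap D (arens (ContinuousLinearMap.mul ℝ A) F G)
              (inclusionInDoubleDual ℝ B x)
            = F (adj1 (adj1 (ContinuousLinearMap.mul ℝ A)) G
              (dualMap' D (inclusionInDoubleDual ℝ B x))) := rfl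
        rw [← h1, hbFG]
        rfl
      rw [h0, hAe, map_add]
      have h2 : F (dualMap' D (G.comp ((adj1 l.flip).flip x)))
          = G (adj1 l.flip bF x) := by
        have h1 : F (dualMap' D (G.comp ((adj1 l.flip).flip x)))
            = bidualMap D F (G.comp ((adj1 l.flip).flip x)) := rfl
        rw [h1, hbF]
        rfl
      rw [h2]
      rfl
    rw [hbFG, hbG, hbF]
    ext H
    have t1 : dualAct (W := Dual ℝ (Dual ℝ A)) (X := Dual ℝ (Dual ℝ B))
          ((arens r.flip).flip) F (inclusionInDoubleDual ℝ (Dual ℝ B) bG) H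
        = H (F.comp (adj1 r.flip bG)) := by
      have hc : (adj1 (adj1 r.flip)) F bG = F.comp (adj1 r.flip bG) := by
        ext y; rfl
      calc dualAct (W := Dual ℝ (Dual ℝ A)) (X := Dual ℝ (Dual ℝ B))
            ((arens r.flip).flip) F (inclusionInDoubleDual ℝ (Dual ℝ B) bG) H
          = H ((adj1 (adj1 r.flip)) F bG) := rfl
        _ = H (F.comp (adj1 r.flip bG)) := by rw [hc]
    have t2 : dualAct (W := Dual ℝ (Dual ℝ A)) (X := Dual ℝ (Dual ℝ B))
          (arens l) G (inclusionInDoubleDual ℝ (Dual ℝ B) bF) H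
        = H (G.comp (adj1 l.flip bF)) := by
      have hc : (adj1 (adj1 l.flip)) G bF = G.comp (adj1 l.flip bF) := by
        ext y; rfl
      calc dualAct (W := Dual ℝ (Dual ℝ A)) (X := Dual ℝ (Dual ℝ B))
            (arens l) G (inclusionInDoubleDual ℝ (Dual ℝ B) bF) H
          = arens l G H bF := rfl
        _ = arens l.flip H G bF := hsF G H
        _ = H ((adj1 (adj1 l.flip)) G bF) := rfl
        _ = H (G.comp (adj1 l.flip bF)) := by rw [hc]
    show inclusionInDoubleDual ℝ (Dual ℝ B) bFG H
      = dualAct (W := Dual ℝ (Dual ℝ A)) (X := Dual ℝ (Dual ℝ B))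
          ((arens r.flip).flip) F (inclusionInDoubleDual ℝ (Dual ℝ B) bG) H
        + dualAct (W := Dual ℝ (Dual ℝ A)) (X := Dual ℝ (Dual ℝ B))
          (arens l) G (inclusionInDoubleDual ℝ (Dual ℝ B) bF) H
    rw [t1, t2, ← map_add H, ← key]
    rfl
  obtain ⟨Ξ, hΞ⟩ := hcoh (bidualMap D) hder
  refine ⟨Ξ.comp (inclusionInDoubleDual ℝ B), fun a => ?_⟩
  ext x
  have e1 : arens r.flip (inclusionInDoubleDual ℝ B x) (inclusionInDoubleDual ℝ A a)
      = inclusionInDoubleDual ℝ B (r a x) := by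
    ext b'; rfl
  have e2 : arens l (inclusionInDoubleDual ℝ A a) (inclusionInDoubleDual ℝ B x)
      = inclusionInDoubleDual ℝ B (l a x) := by
    ext b'; rfl
  calc D a x
      = bidualMap D (inclusionInDoubleDual ℝ A a) (inclusionInDoubleDual ℝ B x) := rfl
    _ = (dualAct (W := Dual ℝ (Dual ℝ A)) (X := Dual ℝ (Dual ℝ B))
          ((arens r.flip).flip) (inclusionInDoubleDual ℝ A a) Ξ
        - dualAct (W := Dual ℝ (Dual ℝ A)) (X := Dual ℝ (Dual ℝ B))
          (arens l) (inclusionInDoubleDual ℝ A a) Ξ)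
          (inclusionInDoubleDual ℝ B x) := by rw [hΞ (inclusionInDoubleDual ℝ A a)]
    _ = Ξ (arens r.flip (inclusionInDoubleDual ℝ B x) (inclusionInDoubleDual ℝ A a))
        - Ξ (arens l (inclusionInDoubleDual ℝ A a) (inclusionInDoubleDual ℝ B x)) := rfl
    _ = Ξ (inclusionInDoubleDual ℝ B (r a x))
        - Ξ (inclusionInDoubleDual ℝ B (l a x)) := by rw [e1, e2]
    _ = (dualAct r a (Ξ.comp (inclusionInDoubleDual ℝ B))
        - dualAct l a (Ξ.comp (inclusionInDoubleDual ℝ B))) x := rfl
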